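/- Every piecewise linear expanding circle map f ∈ E₀^pl (i.e., f is a Lipschitz expanding local homeomorphism fixing 0 that is linear on each Markov interval of some order n) is ergodic and conservative with respect to Lebesgue measure. -/

import Mathlib

open MeasureTheory Set

/-- Markov interval of order `n` expressed through a lift `F` of a circle map fixing `0`:
`(a,b)` is a connected component of the complement of `(F^[n])⁻¹(ℤ)`. -/
def MarkovInterval (F : ℝ → ℝ) (n : ℕ) (a b : ℝ) : Prop :=
  a < b ∧ (∀ x ∈ Set.Ioo a b, F^[n] x ∉ Set.range (Int.cast : ℤ → ℝ)) ∧
    F^[n] a ∈ Set.range (Int.cast : ℤ → ℝ) ∧ F^[n] b ∈ Set.range (Int.cast : ℤ → ℝ)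

/-- `F` is a lift of the circle map `f` of degree `d`, with `F 0 = 0`. -/
def IsLiftOf (f : UnitAddCircle → UnitAddCircle) (F : ℝ → ℝ) (d : ℤ) : Prop :=
  (∀ x : ℝ, f (x : UnitAddCircle) = ((F x : ℝ) : UnitAddCircle)) ∧
    (∀ x : ℝ, F (x + 1) = F x + d) ∧ F 0 = 0

/-- `f ∈ E₀^lip`, via its lift: Lipschitz local homeomorphism of the circle fixing `0`
with `λ_f = essinf |f'| > 1`. -/
def MemELip (F : ℝ → ℝ) (lam : ℝ) : Prop :=
  (∃ K : NNReal, LipschitzWith K F) ∧ (StrictMono F ∨ StrictAnti F) ∧ 1 < lam ∧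
    ∀ᵐ x ∂(volume : Measure ℝ), lam ≤ |deriv F x|

namespace PLErgodicAux

open Filter Topology

/-! ### Generic measure-theoretic and order-theoretic lemmas -/

/-- outer-measure bound for Lipschitz images in ℝ -/
lemma lip_image_le {K : NNReal} {g : ℝ → ℝ} {s : Set ℝ} (h : LipschitzOnWith K g s) :
    volume (g '' s) ≤ K * volume s := by
  have := h.hausdorffMeasure_image_le (d := 1) zero_le_one
  simpa [MeasureTheory.hausdorffMeasure_real, ENNReal.coe_one] using this

/-- image of an open interval under a continuous strictly monotone/antitone map -/
lemma image_Ioo' {G : ℝ → ℝ} (hm : StrictMono G ∨ StrictAnti G) (hc : Continuous G)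
    {a b : ℝ} (hab : a < b) :
    G '' Ioo a b = Ioo (min (G a) (G b)) (max (G a) (G b)) := by
  rcases hm with h | h
  · rw [min_eq_left (h hab).le, max_eq_right (h hab).le]
    apply Subset.antisymm
    · rintro - ⟨z, hz, rfl⟩; exact ⟨h hz.1, h hz.2⟩
    · exact intermediate_value_Ioo hab.le hc.continuousOn
  · rw [min_eq_right (h hab).le, max_eq_left (h hab).le]
    apply Subset.antisymm
    · rintro - ⟨z, hz, rfl⟩; exact ⟨h hz.2, h hz.1⟩
    · exact intermediate_value_Ioo' hab.le hc.continuousOn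

lemma strictMono_or_anti_iterate' {F : ℝ → ℝ} (h : StrictMono F ∨ StrictAnti F) :
    ∀ m : ℕ, StrictMono (F^[m]) ∨ StrictAnti (F^[m]) := by
  intro m
  induction m with
  | zero => left; exact strictMono_id
  | succ m ih =>
    rw [Function.iterate_succ']
    rcases h with h1 | h1 <;> rcases ih with h2 | h2
    · exact Or.inl (h1.comp h2)
    · exact Or.inr (h1.comp_strictAnti h2)
    · exact Or.inr (h1.comp_strictMono h2)
    · exact Or.inl (h1.comp h2)

section Arith
variable {F : ℝ → ℝ} {d : ℤ} {K : NNReal} {lam : ℝ}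

lemma iter_int_translate (hd : ∀ x : ℝ, F (x + 1) = F x + d) :
    ∀ (m : ℕ) (x : ℝ) (p : ℤ), F^[m] (x + p) = F^[m] x + p * (d : ℝ) ^ m := by
  have base : ∀ (x : ℝ) (p : ℤ), F (x + p) = F x + p * d := by
    intro x p
    induction p using Int.induction_on with
    | zero => simp
    | succ k ih =>
      have : x + ((k : ℤ) + 1 : ℤ) = (x + (k : ℤ)) + 1 := by push_cast; ring
      rw [this, hd, ih]; push_cast; ring
    | pred k ih =>
      have h1 : (x + (-(k : ℤ) - 1 : ℤ)) + 1 = x + (-(k:ℤ) : ℤ) := by push_cast; ring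
      have := hd (x + (-(k : ℤ) - 1 : ℤ))
      rw [h1, ih] at this
      have veq : F (x + (-(k:ℤ) - 1 : ℤ)) = F x + (-(k:ℤ)) * d - d := by
        push_cast at this ⊢; linarith
      rw [veq]; push_cast; ring
  intro m
  induction m with
  | zero => simp
  | succ m ih =>
    intro x p
    rw [Function.iterate_succ_apply, Function.iterate_succ_apply]
    have : F (x + p) = F x + ((p * d : ℤ) : ℝ) := by rw [base]; push_cast; ring
    rw [this, ih (F x) (p * d)]
    push_cast; ring

lemma iter_zero (hF0 : F 0 = 0) : ∀ m : ℕ, F^[m] 0 = 0 := by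
  intro m; induction m with
  | zero => rfl
  | succ m ih => rw [Function.iterate_succ_apply, hF0, ih]

lemma iter_int_mem' (hd : ∀ x : ℝ, F (x + 1) = F x + d) (hF0 : F 0 = 0) (m : ℕ) (p : ℤ) :
    F^[m] (p : ℝ) ∈ Set.range (Int.cast : ℤ → ℝ) := by
  have := iter_int_translate hd m 0 p
  rw [zero_add] at this
  rw [this, iter_zero hF0, zero_add]
  exact ⟨p * d ^ m, by push_cast; ring⟩

lemma mem_int_succ' (hd : ∀ x : ℝ, F (x + 1) = F x + d) (hF0 : F 0 = 0) {m : ℕ} {x : ℝ}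
    (h : F^[m] x ∈ Set.range (Int.cast : ℤ → ℝ)) (j : ℕ) :
    F^[m + j] x ∈ Set.range (Int.cast : ℤ → ℝ) := by
  induction j with
  | zero => exact h
  | succ j ih =>
    obtain ⟨q, hq⟩ := ih
    have : F^[m + (j+1)] x = F (F^[m+j] x) :=
      Function.iterate_succ_apply' F (m+j) x
    rw [this, ← hq]
    obtain ⟨r, hr⟩ := iter_int_mem' hd hF0 1 q
    exact ⟨r, by simpa using hr⟩

/-! ### Expansion estimates -/

lemma expansion (hK : LipschitzWith K F) (hlam : 0 < lam)
    (hder : ∀ᵐ x ∂(volume : Measure ℝ), lam ≤ |deriv F x|)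
    (hmono : StrictMono F ∨ StrictAnti F) :
    ∀ x y : ℝ, x ≤ y → lam * (y - x) ≤ |F y - F x| := by
  intro x y hxy
  rcases eq_or_lt_of_le hxy with rfl | hxy
  · simp
  set s : Set ℝ := {z ∈ Ioo x y | DifferentiableAt ℝ F z ∧ lam ≤ |deriv F z|} with hs
  have hmeas : MeasurableSet s := by
    apply (measurableSet_Ioo).inter
    apply ((measurableSet_of_differentiableAt ℝ F).inter)
    exact measurableSet_le measurable_const (measurable_deriv F).abs
  have hfull : volume s = volume (Ioo x y) := by
    apply le_antisymm (measure_mono (sep_subset _ _))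
    have h1 : ∀ᵐ z ∂(volume : Measure ℝ), z ∈ Ioo x y → z ∈ s := by
      filter_upwards [hK.ae_differentiableAt, hder] with z h1 h2 hz
      exact ⟨hz, h1, h2⟩
    apply measure_mono_ae
    filter_upwards [h1] with z h hz using h hz
  have hinj : Function.Injective F := by
    rcases hmono with h | h
    · exact h.injective
    · exact h.injective
  have hder' : ∀ z ∈ s, HasDerivWithinAt F (deriv F z) s z :=
    fun z hz => (hz.2.1.hasDerivAt).hasDerivWithinAt
  have key : (∫⁻ z in s, ENNReal.ofReal |deriv F z| ∂volume) ≤ volume (F '' s) := by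
    have := lintegral_abs_det_fderiv_le_addHaar_image volume hmeas
      (f := F) (f' := fun z => (1 : ℝ →L[ℝ] ℝ).smulRight (deriv F z))
      (fun z hz => (hder' z hz).hasFDerivWithinAt) (hinj.injOn)
    simpa [ContinuousLinearMap.det_toSpanSingleton] using this
  have lower : ENNReal.ofReal (lam * (y - x)) ≤ ∫⁻ z in s, ENNReal.ofReal |deriv F z| ∂volume := by
    calc ENNReal.ofReal (lam * (y - x)) = ENNReal.ofReal lam * volume s := by
          rw [hfull, Real.volume_Ioo, ENNReal.ofReal_mul hlam.le]
      _ = ∫⁻ _ in s, ENNReal.ofReal lam ∂volume := by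
          rw [lintegral_const, Measure.restrict_apply_univ, mul_comm]
      _ ≤ _ := by
          apply lintegral_mono_ae
          filter_upwards [ae_restrict_mem hmeas] with z hz
          exact ENNReal.ofReal_le_ofReal hz.2.2
  have himg : F '' s ⊆ Ioo (min (F x) (F y)) (max (F x) (F y)) := by
    rintro - ⟨z, hz, rfl⟩
    rcases hmono with h | h
    · exact ⟨lt_of_le_of_lt (min_le_left _ _) (h hz.1.1),
        lt_of_lt_of_le (h hz.1.2) (le_max_right _ _)⟩
    · exact ⟨lt_of_le_of_lt (min_le_right _ _) (h hz.1.2),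
        lt_of_lt_of_le (h hz.1.1) (le_max_left _ _)⟩
  have upper : volume (F '' s) ≤ ENNReal.ofReal |F y - F x| := by
    calc volume (F '' s) ≤ volume (Ioo (min (F x) (F y)) (max (F x) (F y))) :=
          measure_mono himg
      _ = ENNReal.ofReal (max (F x) (F y) - min (F x) (F y)) := Real.volume_Ioo
      _ = ENNReal.ofReal |F y - F x| := by rw [max_sub_min_eq_abs]
  have := (lower.trans key).trans upper
  exact (ENNReal.ofReal_le_ofReal_iff (abs_nonneg _)).1 this

lemma expansion_abs (hK : LipschitzWith K F) (hlam : 0 < lam)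
    (hder : ∀ᵐ x ∂(volume : Measure ℝ), lam ≤ |deriv F x|)
    (hmono : StrictMono F ∨ StrictAnti F) :
    ∀ x y : ℝ, lam * |y - x| ≤ |F y - F x| := by
  intro x y
  rcases le_total x y with h | h
  · rw [abs_of_nonneg (by linarith : (0:ℝ) ≤ y - x)]
    exact expansion hK hlam hder hmono x y h
  · rw [abs_sub_comm y x, abs_sub_comm (F y) (F x)]
    rw [abs_of_nonneg (by linarith : (0:ℝ) ≤ x - y)]
    exact expansion hK hlam hder hmono y x h

lemma expansion_iter' (hK : LipschitzWith K F) (hlam : 0 < lam)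
    (hder : ∀ᵐ x ∂(volume : Measure ℝ), lam ≤ |deriv F x|)
    (hmono : StrictMono F ∨ StrictAnti F)
    (m : ℕ) (x y : ℝ) : lam ^ m * |y - x| ≤ |F^[m] y - F^[m] x| := by
  induction m with
  | zero => simp
  | succ m ih =>
    rw [Function.iterate_succ_apply', Function.iterate_succ_apply']
    calc lam ^ (m+1) * |y - x| = lam * (lam ^ m * |y - x|) := by ring
      _ ≤ lam * |F^[m] y - F^[m] x| := by
          apply mul_le_mul_of_nonneg_left ih hlam.le
      _ ≤ |F (F^[m] y) - F (F^[m] x)| := expansion_abs hK hlam hder hmono _ _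

/-! ### Markov interval structure -/

lemma markov_full (hK : LipschitzWith K F) (hmono : StrictMono F ∨ StrictAnti F)
    {m : ℕ} {a b : ℝ} (h : MarkovInterval F m a b) :
    ∃ p : ℤ, F^[m] '' Ioo a b = Ioo (p : ℝ) ((p : ℝ) + 1) ∧
      max (F^[m] a) (F^[m] b) - min (F^[m] a) (F^[m] b) = 1 := by
  obtain ⟨hab, hint, ⟨p, hp⟩, ⟨q, hq⟩⟩ := h
  have himg := image_Ioo' (strictMono_or_anti_iterate' hmono m) (hK.continuous.iterate _) hab
  have hinj : Function.Injective (F^[m]) := by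
    rcases strictMono_or_anti_iterate' hmono m with h | h
    exacts [h.injective, h.injective]
  have hne : F^[m] a ≠ F^[m] b := fun hcon => absurd (hinj hcon) hab.ne
  have hlt : min (F^[m] a) (F^[m] b) < max (F^[m] a) (F^[m] b) := min_lt_max.mpr hne
  obtain ⟨pc, hpc⟩ : ∃ pc : ℤ, (pc : ℝ) = min (F^[m] a) (F^[m] b) := by
    rcases le_total (F^[m] a) (F^[m] b) with hle | hle
    · exact ⟨p, by rw [min_eq_left hle, hp]⟩
    · exact ⟨q, by rw [min_eq_right hle, hq]⟩
  obtain ⟨qc, hqc⟩ : ∃ qc : ℤ, (qc : ℝ) = max (F^[m] a) (F^[m] b) := by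
    rcases le_total (F^[m] a) (F^[m] b) with hle | hle
    · exact ⟨q, by rw [max_eq_right hle, hq]⟩
    · exact ⟨p, by rw [max_eq_left hle, hp]⟩
  have hpq : pc < qc := by
    have : (pc : ℝ) < (qc : ℝ) := by rw [hpc, hqc]; exact hlt
    exact_mod_cast this
  have hq1 : qc = pc + 1 := by
    by_contra hcon
    have h2 : pc + 1 < qc := lt_of_le_of_ne hpq (fun hx => hcon hx.symm)
    have hmem : ((pc + 1 : ℤ) : ℝ) ∈ Ioo (min (F^[m] a) (F^[m] b)) (max (F^[m] a) (F^[m] b)) := by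
      constructor
      · rw [← hpc]; exact_mod_cast lt_add_one pc
      · rw [← hqc]; exact_mod_cast h2
    rw [← himg] at hmem
    obtain ⟨u, hu, hu2⟩ := hmem
    exact hint u hu ⟨pc + 1, hu2.symm⟩
  refine ⟨pc, ?_, ?_⟩
  · rw [himg, ← hpc, ← hqc, hq1]; push_cast; ring_nf
  · rw [← hpc, ← hqc, hq1]; push_cast; ring

lemma markov_len (hK : LipschitzWith K F) (hlam : 0 < lam)
    (hder : ∀ᵐ x ∂(volume : Measure ℝ), lam ≤ |deriv F x|)
    (hmono : StrictMono F ∨ StrictAnti F)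
    {m : ℕ} {a b : ℝ} (h : MarkovInterval F m a b) : lam ^ m * (b - a) ≤ 1 := by
  obtain ⟨_, _, hdiff⟩ := markov_full hK hmono h
  have hexp := expansion_iter' (F := F) hK hlam hder hmono m a b
  have habs : |F^[m] b - F^[m] a| = max (F^[m] a) (F^[m] b) - min (F^[m] a) (F^[m] b) := by
    rcases le_total (F^[m] a) (F^[m] b) with hle | hle
    · rw [abs_of_nonneg (by linarith), max_eq_right hle, min_eq_left hle]
    · rw [abs_of_nonpos (by linarith), max_eq_left hle, min_eq_right hle]; ring
  calc lam ^ m * (b - a) ≤ lam ^ m * |b - a| := by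
        apply mul_le_mul_of_nonneg_left (le_abs_self _) (by positivity)
    _ ≤ |F^[m] b - F^[m] a| := hexp
    _ = 1 := by rw [habs, hdiff]

lemma cylinder_exists' (hK : LipschitzWith K F)
    (hd : ∀ x : ℝ, F (x + 1) = F x + d) (hF0 : F 0 = 0)
    {m : ℕ} {x : ℝ} (hx : F^[m] x ∉ Set.range (Int.cast : ℤ → ℝ)) :
    ∃ a b : ℝ, MarkovInterval F m a b ∧ x ∈ Ioo a b := by
  set S : Set ℝ := (F^[m]) ⁻¹' (Set.range (Int.cast : ℤ → ℝ)) with hS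
  have hScl : IsClosed S :=
    (Int.isClosedEmbedding_coe_real.isClosed_range).preimage (hK.continuous.iterate m)
  have hfl : (⌊x⌋ : ℝ) ∈ S := iter_int_mem' hd hF0 m ⌊x⌋
  have hflx : (⌊x⌋ : ℝ) < x := by
    rcases eq_or_lt_of_le (Int.floor_le x) with h | h
    · exact absurd (h ▸ hfl) hx
    · exact h
  have hclx : x < (⌊x⌋ : ℝ) + 1 := Int.lt_floor_add_one x
  set A := S ∩ Iic x with hA
  have hAne : A.Nonempty := ⟨(⌊x⌋ : ℝ), hfl, (Int.floor_le x)⟩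
  have hAbdd : BddAbove A := ⟨x, fun y hy => hy.2⟩
  have hAcl : IsClosed A := hScl.inter isClosed_Iic
  set a := sSup A with ha
  have haA : a ∈ A := hAcl.csSup_mem hAne hAbdd
  have hax : a < x := lt_of_le_of_ne haA.2 (fun hcon => hx (hcon ▸ haA.1))
  set B := S ∩ Ici x with hB
  have hBne : B.Nonempty := by
    refine ⟨(⌊x⌋ : ℝ) + 1, ?_, hclx.le⟩
    have : ((⌊x⌋ + 1 : ℤ) : ℝ) = (⌊x⌋ : ℝ) + 1 := by push_cast; ring
    exact this ▸ iter_int_mem' hd hF0 m (⌊x⌋ + 1)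
  have hBbdd : BddBelow B := ⟨x, fun y hy => hy.2⟩
  have hBcl : IsClosed B := hScl.inter isClosed_Ici
  set b := sInf B with hb
  have hbB : b ∈ B := hBcl.csInf_mem hBne hBbdd
  have hxb : x < b := lt_of_le_of_ne (hbB.2) (fun hcon => hx (hcon.symm ▸ hbB.1))
  refine ⟨a, b, ⟨hax.trans hxb, ?_, haA.1, hbB.1⟩, hax, hxb⟩
  intro u hu humem
  rcases lt_trichotomy u x with h | h | h
  · exact absurd (le_csSup hAbdd ⟨humem, h.le⟩) (not_le.mpr hu.1)
  · exact hx (h ▸ humem)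
  · exact absurd (csInf_le hBbdd ⟨humem, h.le⟩) (not_le.mpr hu.2)

lemma markov_step' (hK : LipschitzWith K F) (hmono : StrictMono F ∨ StrictAnti F)
    {m : ℕ} {a b : ℝ} (h : MarkovInterval F (m+1) a b) :
    MarkovInterval F m (min (F a) (F b)) (max (F a) (F b)) ∧
      F '' Ioo a b = Ioo (min (F a) (F b)) (max (F a) (F b)) := by
  obtain ⟨hab, hint, hma, hmb⟩ := h
  have hinj : Function.Injective F := by
    rcases hmono with h | h; exacts [h.injective, h.injective]
  have himg := image_Ioo' hmono hK.continuous hab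
  have hne : F a ≠ F b := fun hcon => absurd (hinj hcon) hab.ne
  have hlt : min (F a) (F b) < max (F a) (F b) := min_lt_max.mpr hne
  refine ⟨⟨hlt, ?_, ?_, ?_⟩, himg⟩
  · intro y hy
    rw [← himg] at hy
    obtain ⟨u, hu, rfl⟩ := hy
    intro hmem
    exact hint u hu (by rwa [Function.iterate_succ_apply])
  · rcases le_total (F a) (F b) with hle | hle
    · rw [min_eq_left hle, ← Function.iterate_succ_apply]; exact hma
    · rw [min_eq_right hle, ← Function.iterate_succ_apply]; exact hmb
  · rcases le_total (F a) (F b) with hle | hle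
    · rw [max_eq_right hle, ← Function.iterate_succ_apply]; exact hmb
    · rw [max_eq_left hle, ← Function.iterate_succ_apply]; exact hma

lemma affine_on_markov (hK : LipschitzWith K F)
    (hd : ∀ x : ℝ, F (x + 1) = F x + d) (hF0 : F 0 = 0) {n : ℕ}
    (haff : ∀ a b : ℝ, MarkovInterval F n a b →
      ∃ c₀ c₁ : ℝ, Set.EqOn F (fun x => c₀ + c₁ * x) (Set.Ioo a b))
    {m : ℕ} (hm : n ≤ m) {a b : ℝ} (h : MarkovInterval F m a b) :
    ∃ c₀ c₁ : ℝ, Set.EqOn F (fun x => c₀ + c₁ * x) (Set.Ioo a b) := by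
  obtain ⟨hab, hint, hma, hmb⟩ := h
  set x₀ := (a + b) / 2 with hx₀
  have hx₀mem : x₀ ∈ Ioo a b := ⟨by simp only [hx₀]; linarith, by simp only [hx₀]; linarith⟩
  have hx₀n : F^[n] x₀ ∉ Set.range (Int.cast : ℤ → ℝ) := by
    intro hcon
    have := mem_int_succ' hd hF0 hcon (m - n)
    rw [Nat.add_sub_cancel' hm] at this
    exact hint x₀ hx₀mem this
  obtain ⟨a', b', ⟨ha'b', hint', hma', hmb'⟩, hx₀'⟩ := cylinder_exists' hK hd hF0 hx₀n
  obtain ⟨c₀, c₁, heq⟩ := haff a' b' ⟨ha'b', hint', hma', hmb'⟩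
  refine ⟨c₀, c₁, fun u hu => heq ?_⟩
  have hsub : Ioo a b ⊆ Ioo a' b' := by
    have h1 : a' ≤ a := by
      by_contra hcon
      push_neg at hcon
      have ha'mem : a' ∈ Ioo a b := ⟨hcon, hx₀'.1.trans hx₀mem.2⟩
      have := mem_int_succ' hd hF0 hma' (m - n)
      rw [Nat.add_sub_cancel' hm] at this
      exact hint a' ha'mem this
    have h2 : b ≤ b' := by
      by_contra hcon
      push_neg at hcon
      have hb'mem : b' ∈ Ioo a b := ⟨hx₀mem.1.trans hx₀'.2, hcon⟩
      have := mem_int_succ' hd hF0 hmb' (m - n)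
      rw [Nat.add_sub_cancel' hm] at this
      exact hint b' hb'mem this
    exact Ioo_subset_Ioo h1 h2
  exact hsub hu

lemma iter_affine (hK : LipschitzWith K F) (hmono : StrictMono F ∨ StrictAnti F)
    (hd : ∀ x : ℝ, F (x + 1) = F x + d) (hF0 : F 0 = 0) {m₀ : ℕ}
    (haff : ∀ a b : ℝ, MarkovInterval F (m₀ + 1) a b →
      ∃ c₀ c₁ : ℝ, Set.EqOn F (fun x => c₀ + c₁ * x) (Set.Ioo a b)) :
    ∀ (k : ℕ) (a b : ℝ), MarkovInterval F (m₀ + k) a b →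
      ∃ (a' b' c₀ c₁ : ℝ), MarkovInterval F m₀ a' b' ∧
        Set.EqOn (F^[k]) (fun x => c₀ + c₁ * x) (Set.Ioo a b) ∧
        F^[k] '' Ioo a b = Ioo a' b' := by
  intro k
  induction k with
  | zero =>
    intro a b h
    exact ⟨a, b, 0, 1, h, fun u _ => by simp, by simp⟩
  | succ k ih =>
    intro a b h
    have h' : MarkovInterval F ((m₀ + k) + 1) a b := h
    obtain ⟨hJ', himg⟩ := markov_step' hK hmono h'
    obtain ⟨e₀, e₁, heF⟩ := affine_on_markov hK hd hF0 haff
      (by omega : m₀ + 1 ≤ m₀ + (k+1)) h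
    obtain ⟨a', b', g₀, g₁, hMk, hg, hgimg⟩ := ih _ _ hJ'
    refine ⟨a', b', g₀ + g₁ * e₀, g₁ * e₁, hMk, ?_, ?_⟩
    · intro u hu
      have hFu : F u ∈ Ioo (min (F a) (F b)) (max (F a) (F b)) := by
        rw [← himg]; exact ⟨u, hu, rfl⟩
      have h1 : F^[k+1] u = F^[k] (F u) := Function.iterate_succ_apply F k u
      rw [h1, hg hFu, heF hu]
      simp only []
      ring
    · rw [Function.iterate_succ, Set.image_comp, himg, hgimg]

lemma affine_facts {g : ℝ → ℝ} {c₀ c₁ a b a' b' : ℝ} (hab : a < b) (ha'b' : a' < b')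
    (heq : Set.EqOn g (fun x => c₀ + c₁ * x) (Set.Ioo a b))
    (him : g '' Ioo a b = Ioo a' b') :
    c₁ ≠ 0 ∧ b' - a' = |c₁| * (b - a) ∧ LipschitzOnWith (Real.nnabs c₁) g (Ioo a b) := by
  have himaff : (fun x => c₀ + c₁ * x) '' Ioo a b = Ioo a' b' := by
    rw [← him]; exact (Set.image_congr (fun x hx => (heq hx).symm))
  have hc₁ : c₁ ≠ 0 := by
    intro hcon
    subst hcon
    have h1 : (2 * a' + b') / 3 ∈ Ioo a' b' := ⟨by linarith, by linarith⟩
    have h2 : (a' + 2 * b') / 3 ∈ Ioo a' b' := ⟨by linarith, by linarith⟩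
    rw [← himaff] at h1 h2
    obtain ⟨u1, _, hu1⟩ := h1
    obtain ⟨u2, _, hu2⟩ := h2
    simp only [zero_mul, add_zero] at hu1 hu2
    have : (2 * a' + b') / 3 = (a' + 2 * b') / 3 := by rw [← hu1, ← hu2]
    linarith
  have hmono : StrictMono (fun x => c₀ + c₁ * x) ∨ StrictAnti (fun x => c₀ + c₁ * x) := by
    rcases lt_or_gt_of_ne hc₁ with h | h
    · right; intro u v huv; simp only []; nlinarith
    · left; intro u v huv; simp only []; nlinarith
  have hcont : Continuous (fun x => c₀ + c₁ * x) := by continuity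
  have himaff2 := image_Ioo' hmono hcont hab
  rw [himaff] at himaff2
  have hend : a' = min (c₀ + c₁ * a) (c₀ + c₁ * b) ∧ b' = max (c₀ + c₁ * a) (c₀ + c₁ * b) := by
    have hmin : min (c₀ + c₁ * a) (c₀ + c₁ * b) < max (c₀ + c₁ * a) (c₀ + c₁ * b) := by
      rcases hmono with h | h
      · rw [min_eq_left (h hab).le, max_eq_right (h hab).le]; exact h hab
      · rw [min_eq_right (h hab).le, max_eq_left (h hab).le]; exact h hab
    constructor
    · rw [← csInf_Ioo ha'b', himaff2, csInf_Ioo hmin]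
    · rw [← csSup_Ioo ha'b', himaff2, csSup_Ioo hmin]
  have hlen : b' - a' = |c₁| * (b - a) := by
    rw [hend.1, hend.2]
    rcases abs_cases c₁ with ⟨habs, hsign⟩ | ⟨habs, hsign⟩
    · rw [habs]
      rcases eq_or_lt_of_le hsign with h | h
      · exact absurd h.symm hc₁
      · rw [min_eq_left, max_eq_right] <;> nlinarith
    · rw [habs]
      rw [min_eq_right, max_eq_left] <;> nlinarith
  refine ⟨hc₁, hlen, ?_⟩
  apply LipschitzOnWith.of_dist_le_mul
  intro u hu v hv
  rw [heq hu, heq hv]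
  simp only [Real.dist_eq]
  have h5 : c₀ + c₁ * u - (c₀ + c₁ * v) = c₁ * (u - v) := by ring
  rw [h5, abs_mul]
  have h6 : (Real.nnabs c₁ : ℝ) = |c₁| := rfl
  rw [h6]

end Arith

/-! ### Density and countability -/

lemma density_interval {Y : Set ℝ} (hY : MeasurableSet Y) {x : ℝ}
    (hx : Tendsto (fun r => volume (Y ∩ Metric.closedBall x r) / volume (Metric.closedBall x r))
      (𝓝[>] 0) (𝓝 1)) :
    ∀ ε : ℝ, 0 < ε → ∃ δ : ℝ, 0 < δ ∧ ∀ a b : ℝ, a < x → x < b → b - a ≤ δ →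
      volume (Yᶜ ∩ Ioo a b) ≤ ENNReal.ofReal (ε * (b - a)) := by
  intro ε hε
  set ε' : ℝ := min (ε / 2) (1 / 2) with hε'
  have hε'pos : 0 < ε' := lt_min (by linarith) (by norm_num)
  have hε'le : ε' ≤ 1 / 2 := min_le_right _ _
  set c : ENNReal := ENNReal.ofReal (1 - ε') with hc
  have hclt : c < 1 := by
    rw [hc, ← ENNReal.ofReal_one]
    exact ENNReal.ofReal_lt_ofReal_iff_of_nonneg (by linarith) |>.mpr (by linarith)
  have hev : ∀ᶠ r in 𝓝[>] (0:ℝ),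
      c < volume (Y ∩ Metric.closedBall x r) / volume (Metric.closedBall x r) :=
    hx.eventually (eventually_gt_nhds hclt)
  obtain ⟨δ, hδpos, hδ⟩ := (mem_nhdsGT_iff_exists_Ioc_subset).mp hev
  refine ⟨δ, hδpos, fun a b hax hxb hba => ?_⟩
  have hab : a < b := hax.trans hxb
  set r := b - a with hr
  have hrpos : 0 < r := by simp only [hr]; linarith
  have hrm : r ∈ Ioc (0:ℝ) δ := ⟨hrpos, hba⟩
  have hratio := hδ hrm
  set B := Metric.closedBall x r with hB
  have hBvol : volume B = ENNReal.ofReal (2 * r) := by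
    rw [hB, Real.volume_closedBall]
  have hBne : volume B ≠ 0 := by
    rw [hBvol]; simp only [ne_eq, ENNReal.ofReal_eq_zero, not_le]; linarith
  have hBfin : volume B ≠ ⊤ := by rw [hBvol]; exact ENNReal.ofReal_ne_top
  have hkey : c * volume B < volume (Y ∩ B) :=
    (ENNReal.lt_div_iff_mul_lt (Or.inl hBne) (Or.inl hBfin)).mp hratio
  have hsub : Ioo a b ⊆ B := by
    intro z hz
    rw [hB, Metric.mem_closedBall, Real.dist_eq]
    rcases abs_cases (z - x) with ⟨h1, _⟩ | ⟨h1, _⟩ <;> rw [h1] <;>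
      simp only [hr] <;> [linarith [hz.2, hax]; linarith [hz.1, hxb]]
  have hYc : Yᶜ ∩ Ioo a b ⊆ B \ Y := fun z hz => ⟨hsub hz.2, hz.1⟩
  have hsplit : volume (B ∩ Y) + volume (B \ Y) = volume B := measure_inter_add_diff B hY
  have h1 : volume (B \ Y) + c * volume B ≤ volume B := by
    calc volume (B \ Y) + c * volume B ≤ volume (B \ Y) + volume (B ∩ Y) := by
          rw [Set.inter_comm]
          exact add_le_add le_rfl hkey.le
      _ = volume B := by rw [add_comm]; exact hsplit
  have h2 : volume (B \ Y) ≤ volume B - c * volume B :=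
    ENNReal.le_sub_of_add_le_right (ENNReal.mul_ne_top (by simp [hc]) hBfin) h1
  have h3 : volume B - c * volume B = (1 - c) * volume B := by
    rw [ENNReal.sub_mul (fun _ _ => hBfin), one_mul]
  have h4 : (1 - c) = ENNReal.ofReal ε' := by
    rw [hc, ← ENNReal.ofReal_one, ← ENNReal.ofReal_sub _ (by linarith : (0:ℝ) ≤ 1 - ε')]
    norm_num
  calc volume (Yᶜ ∩ Ioo a b) ≤ volume (B \ Y) := measure_mono hYc
    _ ≤ (1 - c) * volume B := h2.trans h3.le
    _ = ENNReal.ofReal ε' * ENNReal.ofReal (2 * r) := by rw [h4, hBvol]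
    _ = ENNReal.ofReal (ε' * (2 * r)) := (ENNReal.ofReal_mul hε'pos.le).symm
    _ ≤ ENNReal.ofReal (ε * (b - a)) := by
        apply ENNReal.ofReal_le_ofReal
        have h7 : ε' * (2 * r) = 2 * ε' * r := by ring
        rw [h7, hr]
        have h2e : 2 * ε' ≤ ε := by
          have := min_le_left (ε / 2) (1 / 2); simp only [hε'] at *; linarith
        nlinarith

lemma countable_int_preimage {G : ℝ → ℝ} (hinj : Function.Injective G) :
    (G ⁻¹' (Set.range (Int.cast : ℤ → ℝ))).Countable := by
  have : G ⁻¹' (Set.range (Int.cast : ℤ → ℝ)) = ⋃ p : ℤ, G ⁻¹' {(p : ℝ)} := by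
    ext u; simp [Set.range, eq_comm]
  rw [this]
  apply Set.countable_iUnion
  intro p
  apply Set.Subsingleton.countable
  intro u hu v hv
  exact hinj (hu.trans hv.symm)

/-! ### Circle bridge -/

lemma coe_int_shift : ∀ (x : ℝ) (p : ℤ), ((x + p : ℝ) : UnitAddCircle) = (x : UnitAddCircle) := by
  intro x p
  have h0 : ((p : ℝ) : UnitAddCircle) = 0 := by
    rw [QuotientAddGroup.eq_zero_iff]
    exact ⟨p, by simp⟩
  have h1 : ((x + p : ℝ) : UnitAddCircle) = (x : UnitAddCircle) + ((p:ℝ) : UnitAddCircle) := rfl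
  rw [h1, h0, add_zero]

lemma circle_measure_eq {X : Set UnitAddCircle} (hX : MeasurableSet X) :
    volume X = volume (((↑) : ℝ → UnitAddCircle) ⁻¹' X ∩ Ioc (0:ℝ) 1) := by
  have hmp := UnitAddCircle.measurePreserving_mk 0
  have := hmp.measure_preimage hX.nullMeasurableSet
  rw [Measure.restrict_apply' (by simp : MeasurableSet (Ioc (0:ℝ) (0+1)))] at this
  rw [← this]
  norm_num

section Core
open Filter Topology
variable {F : ℝ → ℝ} {d : ℤ} {K : NNReal} {lam : ℝ}

lemma core (hK : LipschitzWith K F) (hK1 : (1:NNReal) ≤ K)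
    (hmono : StrictMono F ∨ StrictAnti F) (hlam : 1 < lam)
    (hder : ∀ᵐ x ∂(volume : Measure ℝ), lam ≤ |deriv F x|)
    (hd : ∀ x : ℝ, F (x + 1) = F x + d) (hF0 : F 0 = 0) {m₀ : ℕ}
    (haff : ∀ a b : ℝ, MarkovInterval F (m₀ + 1) a b →
      ∃ c₀ c₁ : ℝ, Set.EqOn F (fun x => c₀ + c₁ * x) (Set.Ioo a b))
    {Y : Set ℝ} (hY : MeasurableSet Y)
    (hpos : volume (Y ∩ Ioc (0:ℝ) 1) ≠ 0) :
    ∀ ε : ℝ, 0 < ε → ∃ (k : ℕ) (a b : ℝ) (p : ℤ), 1 ≤ k ∧ a < b ∧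
      F^[k] '' Ioo a b = Ioo (p : ℝ) ((p:ℝ) + 1) ∧
      volume (F^[k] '' (Yᶜ ∩ Ioo a b)) ≤ ENNReal.ofReal ε := by
  have hlam0 : (0:ℝ) < lam := by linarith
  have hinj : ∀ m : ℕ, Function.Injective (F^[m]) := by
    intro m
    rcases strictMono_or_anti_iterate' hmono m with h | h
    exacts [h.injective, h.injective]
  -- select a density point avoiding all preimages of integers
  set S : Set ℝ := ⋃ m : ℕ, (F^[m]) ⁻¹' (Set.range (Int.cast : ℤ → ℝ)) with hS
  have hSc : S.Countable := Set.countable_iUnion (fun m => countable_int_preimage (hinj m))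
  have hSnull : volume S = 0 := hSc.measure_zero _
  have hae := Besicovitch.ae_tendsto_measure_inter_div_of_measurableSet (volume : Measure ℝ) hY
  set T : Set ℝ := {x | ¬ Tendsto
      (fun r => volume (Y ∩ Metric.closedBall x r) / volume (Metric.closedBall x r))
      (𝓝[>] 0) (𝓝 (Y.indicator 1 x))} with hT
  have hTnull : volume T = 0 := by
    rw [hT]; exact hae
  have hGne : ((Y ∩ Ioc (0:ℝ) 1) \ (S ∪ T)).Nonempty := by
    apply nonempty_of_measure_ne_zero (μ := volume)
    rw [measure_diff_null (measure_union_null hSnull hTnull)]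
    exact hpos
  obtain ⟨x, ⟨hxY, _⟩, hxB⟩ := hGne
  have hxS : ∀ m : ℕ, F^[m] x ∉ Set.range (Int.cast : ℤ → ℝ) := by
    intro m hcon
    exact hxB (Or.inl (Set.mem_iUnion.mpr ⟨m, hcon⟩))
  have hxT : Tendsto
      (fun r => volume (Y ∩ Metric.closedBall x r) / volume (Metric.closedBall x r))
      (𝓝[>] 0) (𝓝 1) := by
    have := not_or.mp hxB |>.2
    rw [hT, Set.mem_setOf_eq, not_not] at this
    rwa [Set.indicator_of_mem hxY, Pi.one_apply] at this
  have hdens := density_interval hY hxT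
  intro ε hε
  set KR : ℝ := (K : ℝ) ^ m₀ with hKR
  have hKRpos : 0 < KR := by positivity
  have hKR1 : 1 ≤ KR := one_le_pow₀ (by exact_mod_cast hK1)
  set ε' : ℝ := ε / KR with hε'def
  have hε'pos : 0 < ε' := div_pos hε hKRpos
  obtain ⟨δ, hδpos, hδ⟩ := hdens ε' hε'pos
  obtain ⟨k₁, hk₁⟩ := pow_unbounded_of_one_lt (1/δ) hlam
  set k' := k₁ + 1 with hk'
  have hpow : 1/δ < lam ^ (m₀ + k') := by
    calc 1/δ < lam ^ k₁ := hk₁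
      _ ≤ lam ^ (m₀ + k') := pow_le_pow_right₀ hlam.le (by omega)
  obtain ⟨a, b, hMk, hxab⟩ := cylinder_exists' hK hd hF0 (hxS (m₀ + k'))
  have hab : a < b := hMk.1
  have hlen := markov_len hK hlam0 hder hmono hMk
  have hba : b - a ≤ δ := by
    by_contra hcon
    push_neg at hcon
    have h1 : (1/δ) * (b - a) < lam ^ (m₀+k') * (b - a) :=
      mul_lt_mul_of_pos_right hpow (by linarith)
    have h2 : 1 < (1/δ) * (b - a) := by
      rw [one_div]
      rw [show δ⁻¹ * (b-a) = (b-a)/δ from by ring]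
      rw [lt_div_iff₀ hδpos]
      linarith
    linarith
  have hdYc := hδ a b hxab.1 hxab.2 hba
  obtain ⟨a', b', c₀, c₁, hM0, heq, himg1⟩ := iter_affine hK hmono hd hF0 haff k' a b hMk
  obtain ⟨hc1, hlen2, hLip⟩ := affine_facts hab hM0.1 heq himg1
  obtain ⟨p, himg2, -⟩ := markov_full hK hmono hM0
  refine ⟨m₀ + k', a, b, p, by omega, hab, ?_, ?_⟩
  · rw [Function.iterate_add F m₀ k', Set.image_comp, himg1, himg2]
  · have hsub : Yᶜ ∩ Ioo a b ⊆ Ioo a b := Set.inter_subset_right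
    have step2 : F^[m₀ + k'] '' (Yᶜ ∩ Ioo a b)
        = F^[m₀] '' (F^[k'] '' (Yᶜ ∩ Ioo a b)) := by
      rw [Function.iterate_add F m₀ k', Set.image_comp]
    have step3 : volume (F^[m₀] '' (F^[k'] '' (Yᶜ ∩ Ioo a b)))
        ≤ (K^m₀ : NNReal) * volume (F^[k'] '' (Yᶜ ∩ Ioo a b)) :=
      lip_image_le ((hK.iterate m₀).lipschitzOnWith)
    have step1 : volume (F^[k'] '' (Yᶜ ∩ Ioo a b))
        ≤ (Real.nnabs c₁ : ENNReal) * volume (Yᶜ ∩ Ioo a b) :=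
      lip_image_le (hLip.mono hsub)
    have hb'a'1 : b' - a' ≤ 1 := by
      have := markov_len hK hlam0 hder hmono hM0
      have h1 : (1:ℝ) ≤ lam ^ m₀ := one_le_pow₀ hlam.le
      nlinarith [hM0.1]
    calc volume (F^[m₀+k'] '' (Yᶜ ∩ Ioo a b))
        = volume (F^[m₀] '' (F^[k'] '' (Yᶜ ∩ Ioo a b))) := by rw [step2]
      _ ≤ (K^m₀ : NNReal) * volume (F^[k'] '' (Yᶜ ∩ Ioo a b)) := step3
      _ ≤ (K^m₀ : NNReal) * ((Real.nnabs c₁ : ENNReal) * volume (Yᶜ ∩ Ioo a b)) := by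
          exact mul_le_mul_right step1 _
      _ ≤ (K^m₀ : NNReal) * ((Real.nnabs c₁ : ENNReal) * ENNReal.ofReal (ε' * (b - a))) := by
          exact mul_le_mul_right (mul_le_mul_right hdYc _) _
      _ = (K^m₀ : NNReal) * ENNReal.ofReal (|c₁| * (ε' * (b - a))) := by
          rw [ENNReal.ofReal_mul (abs_nonneg c₁), ← Real.coe_nnabs c₁,
            ENNReal.ofReal_coe_nnreal]
      _ = (K^m₀ : NNReal) * ENNReal.ofReal (ε' * (b' - a')) := by
          rw [hlen2]; ring_nf
      _ ≤ (K^m₀ : NNReal) * ENNReal.ofReal ε' := by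
          apply mul_le_mul_right
          apply ENNReal.ofReal_le_ofReal
          nlinarith [hε'pos]
      _ = ENNReal.ofReal (KR * ε') := by
          rw [ENNReal.ofReal_mul hKRpos.le]
          congr 1
          rw [hKR]
          simp [ENNReal.ofReal_pow]
      _ = ENNReal.ofReal ε := by
          rw [hε'def]
          congr 1
          field_simp
end Core

end PLErgodicAux

open PLErgodicAux in
/-- **Piecewise linear expanding maps are ergodic and conservative.**
If `f ∈ E₀^pl`, i.e. `f ∈ E₀^lip` and for some `n ≥ 1`, `f` is linear (affine) on each
Markov interval of order `n`, then `f` is ergodic and conservative with respect to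
Lebesgue measure on the circle. -/
theorem piecewise_linear_ergodic_conservative
    (f : UnitAddCircle → UnitAddCircle) (F : ℝ → ℝ) (d : ℤ) (lam : ℝ)
    (hlift : IsLiftOf f F d) (hlip : MemELip F lam)
    (hpl : ∃ n : ℕ, 1 ≤ n ∧ ∀ a b : ℝ, MarkovInterval F n a b →
      ∃ c₀ c₁ : ℝ, Set.EqOn F (fun x => c₀ + c₁ * x) (Set.Ioo a b)) :
    (∀ X : Set UnitAddCircle, MeasurableSet X → f ⁻¹' X = X →
        volume X = 0 ∨ volume X = 1) ∧
      (∀ X : Set UnitAddCircle, MeasurableSet X →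
        X ∩ (⋃ k : ℕ, ⋃ _ : 1 ≤ k, f^[k] ⁻¹' X) = ∅ → volume X = 0) := by
  obtain ⟨hlift1, hd, hF0⟩ := hlift
  obtain ⟨⟨K₀, hK₀⟩, hmono, hlam1, hder⟩ := hlip
  obtain ⟨n, hn1, haff0⟩ := hpl
  set K : NNReal := max K₀ 1 with hKdef
  have hK : LipschitzWith K F := hK₀.weaken (le_max_left _ _)
  have hK1 : (1:NNReal) ≤ K := le_max_right _ _
  set m₀ := n - 1 with hm₀
  have haff : ∀ a b : ℝ, MarkovInterval F (m₀ + 1) a b →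
      ∃ c₀ c₁ : ℝ, Set.EqOn F (fun x => c₀ + c₁ * x) (Set.Ioo a b) := by
    have heq : m₀ + 1 = n := by omega
    rw [heq]; exact haff0
  have hlift_iter : ∀ (k : ℕ) (x : ℝ),
      f^[k] (x : UnitAddCircle) = ((F^[k] x : ℝ) : UnitAddCircle) := by
    intro k
    induction k with
    | zero => intro x; rfl
    | succ k ih =>
      intro x
      rw [Function.iterate_succ_apply, Function.iterate_succ_apply, hlift1 x, ih (F x)]
  have hmeasmk : Measurable ((↑) : ℝ → UnitAddCircle) :=
    (UnitAddCircle.measurePreserving_mk 0).measurable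
  constructor
  · -- ergodicity
    intro X hX hinv
    by_cases h0 : volume X = 0
    · exact Or.inl h0
    right
    set Y := ((↑) : ℝ → UnitAddCircle) ⁻¹' X with hYdef
    have hY : MeasurableSet Y := hmeasmk hX
    have hpos : volume (Y ∩ Ioc (0:ℝ) 1) ≠ 0 := by
      rw [← circle_measure_eq hX]; exact h0
    have hper : ∀ (t : ℝ) (q : ℤ), t + (q:ℝ) ∈ Y ↔ t ∈ Y := by
      intro t q
      simp only [hYdef, Set.mem_preimage, coe_int_shift t q]
    have hFpre : F ⁻¹' Y = Y := by
      ext u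
      simp only [hYdef, Set.mem_preimage]
      rw [← hlift1 u]
      rw [show f (u : UnitAddCircle) ∈ X ↔ (u : UnitAddCircle) ∈ f ⁻¹' X from Iff.rfl, hinv]
    have hYpre : ∀ k : ℕ, (F^[k]) ⁻¹' Y = Y := by
      intro k
      induction k with
      | zero => rfl
      | succ k ih => rw [Function.iterate_succ, Set.preimage_comp, ih, hFpre]
    have hFimg : ∀ k : ℕ, F^[k] '' Y ⊆ Y := by
      intro k
      rw [Set.image_subset_iff, hYpre k]
    have hzero : volume (Ioo (0:ℝ) 1 \ Y) = 0 := by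
      by_contra hne
      have hfin : volume (Ioo (0:ℝ) 1 \ Y) ≠ ⊤ := by
        apply ne_top_of_le_ne_top (by simp : volume (Ioo (0:ℝ) 1) ≠ ⊤)
        exact measure_mono Set.diff_subset
      set ε : ℝ := (volume (Ioo (0:ℝ) 1 \ Y)).toReal / 2 with hεdef
      have hεpos : 0 < ε := by
        have := ENNReal.toReal_pos hne hfin
        simp only [hεdef]; linarith
      obtain ⟨k, a, b, p, hk1, hab, himg, hbound⟩ :=
        core hK hK1 hmono hlam1 hder hd hF0 haff hY hpos ε hεpos
      have hincl : Ioo (p:ℝ) ((p:ℝ)+1) \ Y ⊆ F^[k] '' (Yᶜ ∩ Ioo a b) := by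
        rintro z ⟨hz1, hz2⟩
        rw [← himg] at hz1
        obtain ⟨u, hu, rfl⟩ := hz1
        refine ⟨u, ⟨?_, hu⟩, rfl⟩
        intro huY
        exact hz2 (hFimg k ⟨u, huY, rfl⟩)
      have hshift : volume (Ioo (0:ℝ) 1 \ Y) = volume (Ioo (p:ℝ) ((p:ℝ)+1) \ Y) := by
        have hset : Ioo (0:ℝ) 1 \ Y = (fun t => t + (p:ℝ)) ⁻¹' (Ioo (p:ℝ) ((p:ℝ)+1) \ Y) := by
          ext t
          simp only [Set.mem_preimage, Set.mem_diff, Set.mem_Ioo]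
          constructor
          · rintro ⟨⟨h1, h2⟩, h3⟩
            exact ⟨⟨by linarith, by linarith⟩, fun hc => h3 ((hper t p).mp hc)⟩
          · rintro ⟨⟨h1, h2⟩, h3⟩
            exact ⟨⟨by linarith, by linarith⟩, fun hc => h3 ((hper t p).mpr hc)⟩
        rw [hset, measure_preimage_add_right]
      have hle : volume (Ioo (0:ℝ) 1 \ Y) ≤ ENNReal.ofReal ε := by
        rw [hshift]
        exact le_trans (measure_mono hincl) hbound
      have hlt : ENNReal.ofReal ε < volume (Ioo (0:ℝ) 1 \ Y) := by
        conv_rhs => rw [← ENNReal.ofReal_toReal hfin]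
        rw [ENNReal.ofReal_lt_ofReal_iff (ENNReal.toReal_pos hne hfin)]
        simp only [hεdef]
        have := ENNReal.toReal_pos hne hfin
        linarith
      exact absurd hle (not_le.mpr hlt)
    -- conclude volume X = 1
    have hXc : volume Xᶜ = 0 := by
      rw [circle_measure_eq hX.compl]
      have hYc : ((↑) : ℝ → UnitAddCircle) ⁻¹' Xᶜ = Yᶜ := rfl
      rw [hYc]
      apply measure_mono_null (t := (Ioo (0:ℝ) 1 \ Y) ∪ {1})
      · rintro z ⟨hz1, hz2⟩
        rcases eq_or_lt_of_le hz2.2 with h | h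
        · exact Or.inr (by simp [h])
        · exact Or.inl ⟨⟨hz2.1, h⟩, hz1⟩
      · exact measure_union_null hzero (measure_singleton 1)
    have hsum : volume X + volume Xᶜ = volume (Set.univ : Set UnitAddCircle) :=
      measure_add_measure_compl hX
    rw [hXc, add_zero, UnitAddCircle.measure_univ] at hsum
    exact hsum
  · -- conservativity
    intro X hX hdisj
    by_contra h0
    set Y := ((↑) : ℝ → UnitAddCircle) ⁻¹' X with hYdef
    have hY : MeasurableSet Y := hmeasmk hX
    have hpos : volume (Y ∩ Ioc (0:ℝ) 1) ≠ 0 := by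
      rw [← circle_measure_eq hX]; exact h0
    have hper : ∀ (t : ℝ) (q : ℤ), t + (q:ℝ) ∈ Y ↔ t ∈ Y := by
      intro t q
      simp only [hYdef, Set.mem_preimage, coe_int_shift t q]
    have hdisjk : ∀ k : ℕ, 1 ≤ k → Y ∩ (F^[k]) ⁻¹' Y = ∅ := by
      intro k hk
      have hXk : X ∩ f^[k] ⁻¹' X = ∅ := by
        apply Set.eq_empty_of_subset_empty
        rw [← hdisj]
        apply Set.inter_subset_inter_right
        exact Set.subset_iUnion₂ (s := fun k _ => f^[k] ⁻¹' X) k hk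
      have hcomm : (F^[k]) ⁻¹' Y = ((↑) : ℝ → UnitAddCircle) ⁻¹' (f^[k] ⁻¹' X) := by
        ext u
        simp only [hYdef, Set.mem_preimage, hlift_iter k u]
      rw [hcomm, hYdef, ← Set.preimage_inter, hXk, Set.preimage_empty]
    have hposIoo : volume (Y ∩ Ioo (0:ℝ) 1) ≠ 0 := by
      intro hcon
      apply hpos
      apply measure_mono_null (t := (Y ∩ Ioo (0:ℝ) 1) ∪ {1})
      · rintro z ⟨hz1, hz2⟩
        rcases eq_or_lt_of_le hz2.2 with h | h
        · exact Or.inr (by simp [h])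
        · exact Or.inl ⟨hz1, hz2.1, h⟩
      · exact measure_union_null hcon (measure_singleton 1)
    have hcfin : volume (Y ∩ Ioo (0:ℝ) 1) ≠ ⊤ := by
      apply ne_top_of_le_ne_top (by simp : volume (Ioo (0:ℝ) 1) ≠ ⊤)
      exact measure_mono Set.inter_subset_right
    set ε : ℝ := (volume (Y ∩ Ioo (0:ℝ) 1)).toReal / 2 with hεdef
    have hεpos : 0 < ε := by
      have := ENNReal.toReal_pos hposIoo hcfin
      simp only [hεdef]; linarith
    obtain ⟨k, a, b, p, hk1, hab, himg, hbound⟩ :=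
      core hK hK1 hmono hlam1 hder hd hF0 haff hY hpos ε hεpos
    have hinter : (Y ∩ F^[k] '' (Y ∩ Ioo a b)).Nonempty := by
      by_contra hemp
      rw [Set.not_nonempty_iff_eq_empty] at hemp
      have hincl : Y ∩ Ioo (p:ℝ) ((p:ℝ)+1) ⊆ F^[k] '' (Yᶜ ∩ Ioo a b) := by
        rintro z ⟨hzY, hzI⟩
        rw [← himg] at hzI
        obtain ⟨u, hu, rfl⟩ := hzI
        by_cases huY : u ∈ Y
        · exact absurd (show F^[k] u ∈ (∅ : Set ℝ) from
            hemp ▸ ⟨hzY, u, ⟨huY, hu⟩, rfl⟩) (Set.notMem_empty _)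
        · exact ⟨u, ⟨huY, hu⟩, rfl⟩
      have hshift : volume (Y ∩ Ioo (0:ℝ) 1) = volume (Y ∩ Ioo (p:ℝ) ((p:ℝ)+1)) := by
        have hset : Y ∩ Ioo (0:ℝ) 1 = (fun t => t + (p:ℝ)) ⁻¹' (Y ∩ Ioo (p:ℝ) ((p:ℝ)+1)) := by
          ext t
          simp only [Set.mem_preimage, Set.mem_inter_iff, Set.mem_Ioo]
          constructor
          · rintro ⟨h1, h2, h3⟩
            exact ⟨(hper t p).mpr h1, by linarith, by linarith⟩
          · rintro ⟨h1, h2, h3⟩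
            exact ⟨(hper t p).mp h1, by linarith, by linarith⟩
        rw [hset, measure_preimage_add_right]
      have hle : volume (Y ∩ Ioo (0:ℝ) 1) ≤ ENNReal.ofReal ε := by
        rw [hshift]
        exact le_trans (measure_mono hincl) hbound
      have hlt : ENNReal.ofReal ε < volume (Y ∩ Ioo (0:ℝ) 1) := by
        conv_rhs => rw [← ENNReal.ofReal_toReal hcfin]
        rw [ENNReal.ofReal_lt_ofReal_iff (ENNReal.toReal_pos hposIoo hcfin)]
        simp only [hεdef]
        have := ENNReal.toReal_pos hposIoo hcfin
        linarith
      exact absurd hle (not_le.mpr hlt)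
    obtain ⟨z, hzY, w, ⟨hwY, hw⟩, hwz⟩ := hinter
    have hmem : w ∈ Y ∩ (F^[k]) ⁻¹' Y := ⟨hwY, by rw [Set.mem_preimage, hwz]; exact hzY⟩
    rw [hdisjk k hk1] at hmem
    exact Set.notMem_empty w hmem
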